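/- Let X be a uniformly convex real Banach space, Y a real Banach space whose dual Y* is uniformly convex (equivalently, Y is uniformly smooth), and θ : S_X × S_{Y*} → ℝ a nonzero function which is uniformly continuous and satisfies θ(−x,y*) = θ(x,−y*) = −θ(x,y*) for all (x,y*) ∈ S_X × S_{Y*}. Let s > 0 be such that θ⁻¹([s,∞)) is nonempty. Then every nonempty closed symmetric subset L of θ⁻¹([s,∞)) has property (P); in particular θ⁻¹([s,∞)) itself has property (P), and θ⁻¹({s}) has property (P) whenever it is nonempty. -/

import Mathlib

open Filter Topology Set

noncomputable section

variable {X Y : Type*}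
  [NormedAddCommGroup X] [NormedSpace ℝ X]
  [NormedAddCommGroup Y] [NormedSpace ℝ Y]

/-- The Hausdorff distance between the symmetric pairs `Γ p = {p, -p}` and `Γ q = {q, -q}`
in `X × Y*` with the sum norm. -/
def dHG (p q : X × (Y →L[ℝ] ℝ)) : ℝ :=
  min (‖p.1 - q.1‖ + ‖p.2 - q.2‖) (‖p.1 + q.1‖ + ‖p.2 + q.2‖)

/-- Property (P) for a subset `L ⊆ S_X × S_{Y*}`. -/
def PropP (L : Set (X × (Y →L[ℝ] ℝ))) : Prop :=
  ∃ ε₀ > (0 : ℝ), ∀ ε : ℝ, 0 < ε → ε < ε₀ → ∃ ϖ > (0 : ℝ), ∀ p ∈ L,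
    ∃ (xs : X →L[ℝ] ℝ) (ye : Y), ‖xs‖ ≤ 1 ∧ ‖ye‖ ≤ 1 ∧
      ∀ q ∈ L, ε ≤ dHG p q → |xs q.1| + |q.2 ye| ≤ xs p.1 + p.2 ye - ϖ

/-- Master lemma: any subset of `θ⁻¹([s,∞)) ∩ (S_X × S_{Y*})` has property (P). -/
theorem propP_aux
    [UniformConvexSpace X] [UniformConvexSpace (Y →L[ℝ] ℝ)]
    (θ : X × (Y →L[ℝ] ℝ) → ℝ)
    (hθuc : ∀ r : ℝ, 0 < r → ∃ α > (0 : ℝ), ∀ p q : X × (Y →L[ℝ] ℝ),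
      ‖p.1‖ = 1 → ‖p.2‖ = 1 → ‖q.1‖ = 1 → ‖q.2‖ = 1 →
      ‖p.1 - q.1‖ + ‖p.2 - q.2‖ < α → |θ p - θ q| < r)
    (hθodd : ∀ p : X × (Y →L[ℝ] ℝ), ‖p.1‖ = 1 → ‖p.2‖ = 1 →
      θ (-p.1, p.2) = -θ p ∧ θ (p.1, -p.2) = -θ p)
    (s : ℝ) (hs : 0 < s)
    (L : Set (X × (Y →L[ℝ] ℝ)))
    (hL : L ⊆ {p : X × (Y →L[ℝ] ℝ) | ‖p.1‖ = 1 ∧ ‖p.2‖ = 1 ∧ s ≤ θ p}) :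
    PropP L := by
  obtain ⟨α, hα, hαθ⟩ := hθuc s hs
  refine ⟨α, hα, fun ε hε hεα => ?_⟩
  obtain ⟨δ₁, hδ₁, hucX⟩ :=
    exists_forall_sphere_dist_add_le_two_sub X (show (0:ℝ) < ε/2 by positivity)
  obtain ⟨δ₂, hδ₂, hucY⟩ :=
    exists_forall_sphere_dist_add_le_two_sub (Y →L[ℝ] ℝ) (show (0:ℝ) < ε/2 by positivity)
  set δ : ℝ := min δ₁ δ₂ with hδdef
  have hδ : 0 < δ := lt_min hδ₁ hδ₂
  have hδle₁ : δ ≤ δ₁ := min_le_left _ _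
  have hδle₂ : δ ≤ δ₂ := min_le_right _ _
  refine ⟨δ/4, by positivity, fun p hp => ?_⟩
  obtain ⟨hx1, hy1, hθp⟩ := hL hp
  obtain ⟨xs, hxs, hxsx'⟩ := exists_dual_vector ℝ p.1 (by
    intro h; rw [h] at hx1; norm_num at hx1)
  have hxsx : xs p.1 = 1 := by rw [hxsx', hx1]; norm_num
  have hlt : (1 : ℝ) - δ/4 < ‖p.2‖ := by rw [hy1]; linarith
  obtain ⟨y, hy, hyval⟩ := p.2.exists_lt_apply_of_lt_opNorm hlt
  set ye : Y := if 0 ≤ p.2 y then y else -y with hyedef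
  have hyenorm : ‖ye‖ ≤ 1 := by
    rw [hyedef]; split <;> simp [le_of_lt hy]
  have hye : 1 - δ/4 < p.2 ye := by
    rw [Real.norm_eq_abs] at hyval
    rw [hyedef]
    split_ifs with h
    · rwa [abs_of_nonneg h] at hyval
    · rw [map_neg]
      rw [abs_of_neg (lt_of_not_ge h)] at hyval
      linarith
  refine ⟨xs, ye, hxs.le, hyenorm, fun q hq hdist => ?_⟩
  obtain ⟨hz1, ht1, hθq⟩ := hL hq
  have h1 : ε ≤ ‖p.1 - q.1‖ + ‖p.2 - q.2‖ := le_trans hdist (min_le_left _ _)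
  have h2 : ε ≤ ‖p.1 + q.1‖ + ‖p.2 + q.2‖ := le_trans hdist (min_le_right _ _)
  -- generic bounds
  have hxsq : |xs q.1| ≤ 1 := by
    have := xs.le_opNorm q.1
    rw [Real.norm_eq_abs, hxs, hz1] at this; linarith
  have hq2ye : |q.2 ye| ≤ 1 := by
    have := q.2.le_opNorm ye
    rw [Real.norm_eq_abs, ht1, one_mul] at this
    linarith
  -- Case A: both X-distances are large
  have caseA : ε/2 ≤ ‖p.1 - q.1‖ → ε/2 ≤ ‖p.1 + q.1‖ →
      |xs q.1| + |q.2 ye| ≤ xs p.1 + p.2 ye - δ/4 := by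
    intro hA1 hA2
    have hb1 : ‖p.1 + q.1‖ ≤ 2 - δ₁ := hucX hx1 hz1 hA1
    have hb2 : ‖p.1 - q.1‖ ≤ 2 - δ₁ := by
      have : ε/2 ≤ ‖p.1 - -q.1‖ := by rwa [sub_neg_eq_add]
      have := hucX hx1 (by rwa [norm_neg] : ‖-q.1‖ = 1) this
      rwa [← sub_eq_add_neg] at this
    have e1 : xs q.1 ≤ 1 - δ₁ := by
      have := xs.le_opNorm (p.1 + q.1)
      rw [Real.norm_eq_abs, hxs, one_mul, map_add, hxsx] at this
      have habs := le_abs_self (1 + xs q.1)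
      linarith
    have e2 : -xs q.1 ≤ 1 - δ₁ := by
      have := xs.le_opNorm (p.1 - q.1)
      rw [Real.norm_eq_abs, hxs, one_mul, map_sub, hxsx] at this
      have habs := le_abs_self (1 - xs q.1)
      linarith
    have : |xs q.1| ≤ 1 - δ₁ := abs_le.2 ⟨by linarith, e1⟩
    rw [hxsx]
    linarith
  -- Case B: both Y*-distances are large
  have caseB : ε/2 ≤ ‖p.2 - q.2‖ → ε/2 ≤ ‖p.2 + q.2‖ →
      |xs q.1| + |q.2 ye| ≤ xs p.1 + p.2 ye - δ/4 := by
    intro hB1 hB2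
    have hb1 : ‖p.2 + q.2‖ ≤ 2 - δ₂ := hucY hy1 ht1 hB1
    have hb2 : ‖p.2 - q.2‖ ≤ 2 - δ₂ := by
      have : ε/2 ≤ ‖p.2 - -q.2‖ := by rwa [sub_neg_eq_add]
      have := hucY hy1 (by rwa [norm_neg] : ‖-q.2‖ = 1) this
      rwa [← sub_eq_add_neg] at this
    have e1 : q.2 ye ≤ 2 - δ₂ - p.2 ye := by
      have h := (p.2 + q.2).le_opNorm ye
      rw [Real.norm_eq_abs] at h
      have : (p.2 + q.2) ye = p.2 ye + q.2 ye := rfl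
      rw [this] at h
      have habs := le_abs_self (p.2 ye + q.2 ye)
      have hmul : ‖p.2 + q.2‖ * ‖ye‖ ≤ 2 - δ₂ := by
        calc ‖p.2 + q.2‖ * ‖ye‖ ≤ (2 - δ₂) * 1 := by
              apply mul_le_mul hb1 hyenorm (norm_nonneg _) (by linarith)
          _ = 2 - δ₂ := mul_one _
      linarith
    have e2 : -q.2 ye ≤ 2 - δ₂ - p.2 ye := by
      have h := (p.2 - q.2).le_opNorm ye
      rw [Real.norm_eq_abs] at h
      have : (p.2 - q.2) ye = p.2 ye - q.2 ye := rfl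
      rw [this] at h
      have habs := le_abs_self (p.2 ye - q.2 ye)
      have hmul : ‖p.2 - q.2‖ * ‖ye‖ ≤ 2 - δ₂ := by
        calc ‖p.2 - q.2‖ * ‖ye‖ ≤ (2 - δ₂) * 1 := by
              apply mul_le_mul hb2 hyenorm (norm_nonneg _) (by linarith)
          _ = 2 - δ₂ := mul_one _
      linarith
    have : |q.2 ye| ≤ 2 - δ₂ - p.2 ye := abs_le.2 ⟨by linarith, e1⟩
    rw [hxsx]
    linarith
  -- Mixed case C: q is close to (-p.1, p.2): contradiction via θ
  have caseC : ‖p.1 + q.1‖ < ε/2 → ‖p.2 - q.2‖ < ε/2 → False := by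
    intro hC1 hC2
    have hkey := hαθ (-p.1, p.2) q (by simpa using hx1) hy1 hz1 ht1 (by
      simp only
      have : ‖-p.1 - q.1‖ = ‖p.1 + q.1‖ := by
        rw [show -p.1 - q.1 = -(p.1 + q.1) by abel, norm_neg]
      rw [this]; linarith)
    rw [(hθodd p hx1 hy1).1, abs_lt] at hkey
    linarith [hkey.1]
  -- Mixed case D: q is close to (p.1, -p.2): contradiction via θ
  have caseD : ‖p.1 - q.1‖ < ε/2 → ‖p.2 + q.2‖ < ε/2 → False := by
    intro hD1 hD2
    have hkey := hαθ (p.1, -p.2) q hx1 (by simpa using hy1) hz1 ht1 (by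
      simp only
      have : ‖-p.2 - q.2‖ = ‖p.2 + q.2‖ := by
        rw [show -p.2 - q.2 = -(p.2 + q.2) by abel, norm_neg]
      rw [this]; linarith)
    rw [(hθodd p hx1 hy1).2, abs_lt] at hkey
    linarith [hkey.1]
  by_cases hA1 : ε/2 ≤ ‖p.1 - q.1‖
  · by_cases hA2 : ε/2 ≤ ‖p.1 + q.1‖
    · exact caseA hA1 hA2
    · push_neg at hA2
      have hB2 : ε/2 ≤ ‖p.2 + q.2‖ := by linarith
      by_cases hB1 : ε/2 ≤ ‖p.2 - q.2‖
      · exact caseB hB1 hB2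
      · push_neg at hB1
        exact absurd (caseC hA2 hB1) (by simp)
  · push_neg at hA1
    have hB1 : ε/2 ≤ ‖p.2 - q.2‖ := by linarith
    by_cases hB2 : ε/2 ≤ ‖p.2 + q.2‖
    · exact caseB hB1 hB2
    · push_neg at hB2
      exact absurd (caseD hA1 hB2) (by simp)

theorem statement9
    [CompleteSpace X] [CompleteSpace Y]
    [UniformConvexSpace X] [UniformConvexSpace (Y →L[ℝ] ℝ)]
    (θ : X × (Y →L[ℝ] ℝ) → ℝ)
    (hθnz : ∃ p : X × (Y →L[ℝ] ℝ), ‖p.1‖ = 1 ∧ ‖p.2‖ = 1 ∧ θ p ≠ 0)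
    (hθuc : ∀ r : ℝ, 0 < r → ∃ α > (0 : ℝ), ∀ p q : X × (Y →L[ℝ] ℝ),
      ‖p.1‖ = 1 → ‖p.2‖ = 1 → ‖q.1‖ = 1 → ‖q.2‖ = 1 →
      ‖p.1 - q.1‖ + ‖p.2 - q.2‖ < α → |θ p - θ q| < r)
    (hθodd : ∀ p : X × (Y →L[ℝ] ℝ), ‖p.1‖ = 1 → ‖p.2‖ = 1 →
      θ (-p.1, p.2) = -θ p ∧ θ (p.1, -p.2) = -θ p)
    (s : ℝ) (hs : 0 < s)
    (hpre : {p : X × (Y →L[ℝ] ℝ) | ‖p.1‖ = 1 ∧ ‖p.2‖ = 1 ∧ s ≤ θ p}.Nonempty) :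
    (∀ L : Set (X × (Y →L[ℝ] ℝ)), L.Nonempty → IsClosed L → (∀ p ∈ L, -p ∈ L) →
      L ⊆ {p : X × (Y →L[ℝ] ℝ) | ‖p.1‖ = 1 ∧ ‖p.2‖ = 1 ∧ s ≤ θ p} → PropP L) ∧
    PropP {p : X × (Y →L[ℝ] ℝ) | ‖p.1‖ = 1 ∧ ‖p.2‖ = 1 ∧ s ≤ θ p} ∧
    ({p : X × (Y →L[ℝ] ℝ) | ‖p.1‖ = 1 ∧ ‖p.2‖ = 1 ∧ θ p = s}.Nonempty →
      PropP {p : X × (Y →L[ℝ] ℝ) | ‖p.1‖ = 1 ∧ ‖p.2‖ = 1 ∧ θ p = s}) := by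
  refine ⟨fun L _ _ _ hL => propP_aux θ hθuc hθodd s hs L hL,
    propP_aux θ hθuc hθodd s hs _ subset_rfl,
    fun _ => propP_aux θ hθuc hθodd s hs _ ?_⟩
  rintro p ⟨h1, h2, h3⟩
  exact ⟨h1, h2, h3.ge⟩
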